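/- Let m ≥ 2 and let w, v be non-empty words in 𝒜₁, 𝒜₂ respectively. Then, modulo L^{(m−1)}, one has (Ψ^{(m)} ∘ j₁^{(m)})(w) = j₁^{(m−1)}(w) + g₁^{(m−1)}(w) and (Ψ^{(m)} ∘ j₂^{(m)})(v) = j₂^{(m−1)}(v) + g₂^{(m−1)}(v), where g₁^{(m−1)}(w) = ψ₁(w)·(1^{⊗(m−1)} ⊗ 1^{⊗(m−2)} ⊗ (1−t)) and g₂^{(m−1)}(v) = ψ₂(v)·(1^{⊗(m−2)} ⊗ (1−t) ⊗ 1^{⊗(m−1)}). (Proposition 3.0) -/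

import Mathlib

open scoped ComplexOrder TensorProduct

/-- `w` is a non-empty word in the generating set `G`. -/
def IsWord {R : Type*} [Monoid R] (G : Set R) (w : R) : Prop :=
  ∃ l : List R, l ≠ [] ∧ (∀ x ∈ l, x ∈ G) ∧ w = l.prod

/-- `φ` is a state on the unital complex *-algebra `R`. -/
def IsState {R : Type*} [Ring R] [Algebra ℂ R] [StarRing R] (φ : R →ₗ[ℂ] ℂ) : Prop :=
  φ 1 = 1 ∧ ∀ x, 0 ≤ φ (x * star x)

/-- The ordered product `f a * f (a+1) * ⋯ * f b` (an empty product if `b < a`). -/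
def ordProd {T : Type*} [Monoid T] (f : ℕ → T) (a b : ℕ) : T :=
  ((List.range' a (b + 1 - a)).map f).prod

/-- The element `t_{[k,m]}`: `g` at the tensor sites `k, …, m` (1-based), with the
convention `t_{[0,m]} = 0`. -/
def tBlock {T : Type*} [Ring T] (g : ℕ → T) (k m : ℕ) : T :=
  if k = 0 then 0 else ordProd g k m

/-- The embedding at tensor site `k` among the sites `1, …, m`, with value `0` out of
range (the convention `i_{m+1,m}(a) = 0`). -/
def embSite {T R : Type*} [Ring T] (e : ℕ → R → T) (m k : ℕ) (x : R) : T :=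
  if 1 ≤ k ∧ k ≤ m then e k x else 0

/-- `φt` is the Boolean extension of the state `φ` to the free product `S = R * ℂ[t]`
(with canonical embedding `ι : R → S` and separator `t`):  one has `φt 1 = 1` and
`φt (t^{e₀} w₁ t^{e₁} ⋯ wₙ t^{eₙ}) = φ(w₁) ⋯ φ(wₙ)` for all non-empty words `wᵢ` in the
generating set `G` and all exponents with `e₁, …, e_{n-1} > 0`. -/
def IsBooleanExt {R S : Type*} [Ring R] [Algebra ℂ R] [Ring S] [Algebra ℂ S]
    (G : Set R) (ι : R → S) (t : S) (φ : R →ₗ[ℂ] ℂ) (φt : S →ₗ[ℂ] ℂ) : Prop :=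
  φt 1 = 1 ∧
  ∀ (n : ℕ) (w : ℕ → R) (e : ℕ → ℕ),
    (∀ i < n, IsWord G (w i)) →
    (∀ i, 0 < i → i < n → 0 < e i) →
    φt (((List.range n).map fun i => t ^ e i * ι (w i)).prod * t ^ e n) =
      ((List.range n).map fun i => φ (w i)).prod

/- `A i` is the unital free *-algebra `𝒜ᵢ₊₁` with generating set `G i`; `B i` is
`𝒜̃ᵢ₊₁ = 𝒜ᵢ₊₁ * ℂ[t]` with embedding `ι i` and hermitian separator `t i`;
`T = 𝒜̃^{(m)}` and `T' = 𝒜̃^{(m-1)}` are the `m`- and `(m-1)`-level tensor products, with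
commuting site embeddings `e i k` (`k = 1, …, m`) and `f i k` (`k = 1, …, m-1`);
`Ψ = Ψ^{(m)} = id^{⊗(m-1)} ⊗ ψ̃₁ ⊗ id^{⊗(m-1)} ⊗ ψ̃₂ : T → T'` is the condition map;
`j i`, `j' i` are the *-homomorphisms `jᵢ₊₁^{(m)}`, `jᵢ₊₁^{(m-1)}`; `L'` is the ideal
`L^{(m-1)}`. -/
namespace CMJ

variable {T : Type*} [Monoid T]

lemma ordProd_empty (g : ℕ → T) {a b : ℕ} (h : b < a) : ordProd g a b = 1 := by
  unfold ordProd
  rw [show b + 1 - a = 0 by omega]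
  simp

lemma ordProd_single (g : ℕ → T) (a : ℕ) : ordProd g a a = g a := by
  unfold ordProd
  rw [show a + 1 - a = 1 by omega]
  simp

lemma ordProd_split (g : ℕ → T) {a c b : ℕ} (h1 : a ≤ c + 1) (h2 : c ≤ b) :
    ordProd g a b = ordProd g a c * ordProd g (c + 1) b := by
  unfold ordProd
  rw [← List.prod_append, ← List.map_append]
  congr 1
  have h := List.range'_append (s := a) (m := c + 1 - a) (n := b - c) (step := 1)
  rw [one_mul, show a + (c + 1 - a) = c + 1 by omega] at h
  rw [show b + 1 - a = c + 1 - a + (b - c) by omega, show b + 1 - (c + 1) = b - c by omega]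
  exact congrArg (List.map g) h.symm

lemma ordProd_succ_left (g : ℕ → T) {a b : ℕ} (h : a ≤ b) :
    ordProd g a b = g a * ordProd g (a + 1) b := by
  rw [ordProd_split g (show a ≤ a + 1 by omega) h, ordProd_single]

lemma ordProd_congr {g g' : ℕ → T} {a b : ℕ} (h : ∀ l, a ≤ l → l ≤ b → g l = g' l) :
    ordProd g a b = ordProd g' a b := by
  unfold ordProd
  congr 1
  apply List.map_congr_left
  intro l hl
  rw [List.mem_range'_1] at hl
  exact h l hl.1 (by omega)

lemma ordProd_one {a b : ℕ} : ordProd (fun _ => (1 : T)) a b = 1 := by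
  unfold ordProd
  simp

lemma commute_ordProd {x : T} {g : ℕ → T} {a b : ℕ}
    (h : ∀ l, a ≤ l → l ≤ b → Commute x (g l)) : Commute x (ordProd g a b) := by
  apply Commute.list_prod_right
  intro y hy
  obtain ⟨l, hl, rfl⟩ := List.mem_map.mp hy
  rw [List.mem_range'_1] at hl
  exact h l hl.1 (by omega)

lemma ordProd_split3 (g : ℕ → T) {a s b : ℕ} (hs1 : 1 ≤ s) (ha : a ≤ s) (hb : s ≤ b) :
    ordProd g a b = ordProd g a (s - 1) * g s * ordProd g (s + 1) b := by
  rw [ordProd_split g (show a ≤ (s - 1) + 1 by omega) (show s - 1 ≤ b by omega),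
    show s - 1 + 1 = s by omega, ordProd_succ_left g hb, mul_assoc]

end CMJ

namespace CMJ
section SiteProd

variable {R S : Type*} [Ring R] [Ring S]

/-- Product over sites `a, …, b` of embedded elements `e l (x l)`. -/
def siteProd (e : ℕ → R →+* S) (x : ℕ → R) (a b : ℕ) : S :=
  ordProd (fun l => e l (x l)) a b

variable {e : ℕ → R →+* S}

lemma siteProd_congr {x x' : ℕ → R} {a b : ℕ} (h : ∀ l, a ≤ l → l ≤ b → x l = x' l) :
    siteProd e x a b = siteProd e x' a b :=
  ordProd_congr (fun l h1 h2 => by rw [h l h1 h2])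

lemma siteProd_one {a b : ℕ} : siteProd e (fun _ => 1) a b = 1 := by
  unfold siteProd
  rw [ordProd_congr (g' := fun _ => (1 : S)) (fun l _ _ => by simp), ordProd_one]

lemma siteProd_mul (hc : ∀ k k', k ≠ k' → ∀ x y, Commute (e k x) (e k' y))
    {x y : ℕ → R} {a b : ℕ} :
    siteProd e x a b * siteProd e y a b = siteProd e (fun l => x l * y l) a b := by
  suffices h : ∀ (n a : ℕ),
      ((List.range' a n).map (fun l => e l (x l))).prod *
        ((List.range' a n).map (fun l => e l (y l))).prod =
      ((List.range' a n).map (fun l => e l (x l * y l))).prod by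
    exact h (b + 1 - a) a
  intro n
  induction n with
  | zero => simp
  | succ n ih =>
    intro a
    rw [List.range'_succ]
    simp only [List.map_cons, List.prod_cons]
    have hcom : Commute (e a (y a))
        (((List.range' (a + 1) n).map (fun l => e l (x l))).prod) := by
      apply Commute.list_prod_right
      intro z hz
      obtain ⟨l, hl, rfl⟩ := List.mem_map.mp hz
      rw [List.mem_range'_1] at hl
      exact (hc a l (by omega) _ _)
    have key : ((List.range' (a + 1) n).map (fun l => e l (x l))).prod *
        (e a (y a) * ((List.range' (a + 1) n).map (fun l => e l (y l))).prod) =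
        e a (y a) * (((List.range' (a + 1) n).map (fun l => e l (x l))).prod *
          ((List.range' (a + 1) n).map (fun l => e l (y l))).prod) := by
      rw [← mul_assoc, ← hcom.eq, mul_assoc]
    rw [mul_assoc, key, ← mul_assoc, ← map_mul, ih (a + 1)]

lemma siteProd_update_one {s a b : ℕ} (hs1 : 1 ≤ s) (ha : a ≤ s) (hb : s ≤ b) (y : R) :
    siteProd e (Function.update (fun _ => 1) s y) a b = e s y := by
  unfold siteProd
  rw [ordProd_split3 _ hs1 ha hb]
  have h1 : ordProd (fun l => e l (Function.update (fun _ => (1 : R)) s y l)) a (s - 1) = 1 := by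
    rw [ordProd_congr (g' := fun _ => (1 : S)) (fun l hl1 hl2 => by
      rw [Function.update_of_ne (by omega)]; simp), ordProd_one]
  have h2 : ordProd (fun l => e l (Function.update (fun _ => (1 : R)) s y l)) (s + 1) b = 1 := by
    rw [ordProd_congr (g' := fun _ => (1 : S)) (fun l hl1 hl2 => by
      rw [Function.update_of_ne (by omega)]; simp), ordProd_one]
  rw [h1, h2, Function.update_self, one_mul, mul_one]

lemma siteProd_mul_right (hc : ∀ k k', k ≠ k' → ∀ x y, Commute (e k x) (e k' y))
    {s a b : ℕ} (hs1 : 1 ≤ s) (ha : a ≤ s) (hb : s ≤ b) (x : ℕ → R) (y : R) :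
    siteProd e x a b * e s y = siteProd e (Function.update x s (x s * y)) a b := by
  rw [← siteProd_update_one (e := e) hs1 ha hb y, siteProd_mul hc]
  apply siteProd_congr
  intro l hl1 hl2
  by_cases hls : l = s
  · subst hls; simp
  · simp [Function.update_of_ne hls]

lemma siteProd_mul_left (hc : ∀ k k', k ≠ k' → ∀ x y, Commute (e k x) (e k' y))
    {s a b : ℕ} (hs1 : 1 ≤ s) (ha : a ≤ s) (hb : s ≤ b) (x : ℕ → R) (y : R) :
    e s y * siteProd e x a b = siteProd e (Function.update x s (y * x s)) a b := by
  rw [← siteProd_update_one (e := e) hs1 ha hb y, siteProd_mul hc]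
  apply siteProd_congr
  intro l hl1 hl2
  by_cases hls : l = s
  · subst hls; simp
  · simp [Function.update_of_ne hls]

end SiteProd
end CMJ

namespace CMJ
section Expand

variable {BX BY S : Type*} [Ring BX] [Ring BY] [Ring S]

/-- The generic form of the homomorphisms `j`. -/
def jGen (g : ℕ → BX →+* S) (h : ℕ → BY →+* S) (tY : BY) (μ : ℕ) (α : BX) : S :=
  ∑ k ∈ Finset.Icc 1 μ,
    (embSite (fun l x => g l x) μ k α - embSite (fun l x => g l x) μ (k + 1) α) *
      tBlock (fun l => h l tY) k μ

variable {g : ℕ → BX →+* S} {h : ℕ → BY →+* S} {tY : BY}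

lemma embSite_in {μ k : ℕ} (h1 : 1 ≤ k) (h2 : k ≤ μ) (α : BX) :
    embSite (fun l x => g l x) μ k α = g k α := if_pos ⟨h1, h2⟩

lemma embSite_out {μ k : ℕ} (h2 : μ < k) (α : BX) :
    embSite (fun l x => g l x) μ k α = 0 := if_neg (by omega)

lemma tBlock_eq {k μ : ℕ} (h1 : 1 ≤ k) (h2 : k ≤ μ) :
    tBlock (fun l => h l tY) k μ =
      siteProd h (fun l => tY ^ (if k ≤ l then 1 else 0)) 1 μ := by
  unfold tBlock siteProd
  rw [if_neg (show ¬ k = 0 by omega)]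
  have hsplit := ordProd_split (g := fun l => h l (tY ^ (if k ≤ l then 1 else 0)))
    (show 1 ≤ (k - 1) + 1 by omega) (show k - 1 ≤ μ by omega)
  rw [show k - 1 + 1 = k by omega] at hsplit
  have e1 : ordProd (fun l => h l (tY ^ (if k ≤ l then 1 else 0))) 1 (k - 1) = 1 := by
    rw [ordProd_congr (g' := fun _ => 1) (fun l hl1 hl2 => by rw [if_neg (by omega)]; simp),
      ordProd_one]
  have e2 : ordProd (fun l => h l (tY ^ (if k ≤ l then 1 else 0))) k μ =
      ordProd (fun l => h l tY) k μ :=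
    ordProd_congr (fun l hl1 hl2 => by rw [if_pos hl1, pow_one])
  rw [hsplit, e1, one_mul]
  exact e2.symm

lemma jGen_expand (N : ℕ) (α : BX) :
    jGen g h tY (N + 1) α =
      (∑ k ∈ Finset.Icc 1 (N + 1), g k α * tBlock (fun l => h l tY) k (N + 1))
      - ∑ k ∈ Finset.Icc 1 N, g (k + 1) α * tBlock (fun l => h l tY) k (N + 1) := by
  unfold jGen
  have step1 : ∀ k ∈ Finset.Icc 1 (N + 1),
      (embSite (fun l x => g l x) (N + 1) k α - embSite (fun l x => g l x) (N + 1) (k + 1) α) *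
        tBlock (fun l => h l tY) k (N + 1) =
      g k α * tBlock (fun l => h l tY) k (N + 1) -
        embSite (fun l x => g l x) (N + 1) (k + 1) α * tBlock (fun l => h l tY) k (N + 1) := by
    intro k hk
    rw [Finset.mem_Icc] at hk
    rw [sub_mul, embSite_in hk.1 hk.2]
  rw [Finset.sum_congr rfl step1, Finset.sum_sub_distrib]
  congr 1
  rw [Finset.sum_Icc_succ_top (show 1 ≤ N + 1 by omega), embSite_out (by omega), zero_mul,
    add_zero]
  exact Finset.sum_congr rfl (fun k hk => by
    rw [Finset.mem_Icc] at hk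
    rw [embSite_in (by omega) (by omega)])

lemma commute_hpow_jGen
    (hhh : ∀ k k', k ≠ k' → ∀ x y, Commute (h k x) (h k' y))
    (hgh : ∀ k k' x y, Commute (g k x) (h k' y)) (μ : ℕ) :
    ∀ (s n : ℕ) (β : BX), Commute (h s (tY ^ n)) (jGen g h tY μ β) := by
  intro s n β
  apply Commute.sum_right
  intro k _
  apply Commute.mul_right
  · refine Commute.sub_right ?_ ?_ <;>
      · unfold embSite
        split
        · exact (hgh _ _ _ _).symm
        · exact Commute.zero_right _
  · unfold tBlock
    split
    · exact Commute.zero_right _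
    · apply commute_ordProd
      intro l _ _
      by_cases hsl : s = l
      · subst hsl
        rw [map_pow]
        exact (Commute.refl _).pow_left n
      · exact hhh s l hsl _ _

lemma commute_hpow_prodjGen
    (hhh : ∀ k k', k ≠ k' → ∀ x y, Commute (h k x) (h k' y))
    (hgh : ∀ k k' x y, Commute (g k x) (h k' y)) (μ : ℕ) (as : List BX) :
    ∀ (s n : ℕ), Commute (h s (tY ^ n)) ((as.map (jGen g h tY μ)).prod) := by
  intro s n
  apply Commute.list_prod_right
  intro z hz
  obtain ⟨β, _, rfl⟩ := List.mem_map.mp hz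
  exact commute_hpow_jGen hhh hgh μ s n β

lemma F1 (hgg : ∀ k k', k ≠ k' → ∀ x y, Commute (g k x) (g k' y))
    (hhh : ∀ k k', k ≠ k' → ∀ x y, Commute (h k x) (h k' y))
    (N : ℕ) (b : ℕ → BX) (c : ℕ → ℕ) (Z : S)
    (hZ : ∀ (s n : ℕ), Commute (h s (tY ^ n)) Z) (α : BX) :
    siteProd g b 1 (N + 1) * jGen g h tY (N + 1) α * Z *
        siteProd h (fun l => tY ^ c l) 1 (N + 1) =
      (∑ k ∈ Finset.Icc 1 (N + 1),
        siteProd g (Function.update b k (b k * α)) 1 (N + 1) * Z *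
          siteProd h (fun l => tY ^ ((if k ≤ l then 1 else 0) + c l)) 1 (N + 1))
      - ∑ k ∈ Finset.Icc 1 N,
        siteProd g (Function.update b (k + 1) (b (k + 1) * α)) 1 (N + 1) * Z *
          siteProd h (fun l => tY ^ ((if k ≤ l then 1 else 0) + c l)) 1 (N + 1) := by
  have term : ∀ s, 1 ≤ s → s ≤ N + 1 → ∀ k, 1 ≤ k → k ≤ N + 1 →
      siteProd g b 1 (N + 1) * (g s α * tBlock (fun l => h l tY) k (N + 1)) * Z *
          siteProd h (fun l => tY ^ c l) 1 (N + 1) =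
        siteProd g (Function.update b s (b s * α)) 1 (N + 1) * Z *
          siteProd h (fun l => tY ^ ((if k ≤ l then 1 else 0) + c l)) 1 (N + 1) := by
    intro s hs1 hs2 k hk1 hk2
    have hcomZ : Commute (tBlock (fun l => h l tY) k (N + 1)) Z := by
      unfold tBlock
      split
      · exact Commute.zero_left _
      · refine (commute_ordProd (x := Z) fun l _ _ => ?_).symm
        have h1 := hZ l 1
        rw [pow_one] at h1
        exact h1.symm
    have hcomtB : tBlock (fun l => h l tY) k (N + 1) *
        siteProd h (fun l => tY ^ c l) 1 (N + 1) =
        siteProd h (fun l => tY ^ ((if k ≤ l then 1 else 0) + c l)) 1 (N + 1) := by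
      rw [tBlock_eq hk1 hk2, siteProd_mul hhh]
      exact siteProd_congr (fun l _ _ => by rw [← pow_add])
    rw [← mul_assoc (siteProd g b 1 (N + 1)) (g s α), siteProd_mul_right hgg hs1 hs1 hs2,
      mul_assoc (siteProd g (Function.update b s (b s * α)) 1 (N + 1)) _ Z, hcomZ.eq,
      ← mul_assoc (siteProd g (Function.update b s (b s * α)) 1 (N + 1)) Z,
      mul_assoc (siteProd g (Function.update b s (b s * α)) 1 (N + 1) * Z), hcomtB]
  rw [jGen_expand, mul_sub, sub_mul, sub_mul, Finset.mul_sum, Finset.sum_mul, Finset.sum_mul,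
    Finset.mul_sum, Finset.sum_mul, Finset.sum_mul]
  congr 1
  · exact Finset.sum_congr rfl (fun k hk => by
      rw [Finset.mem_Icc] at hk
      exact term k hk.1 hk.2 k hk.1 hk.2)
  · exact Finset.sum_congr rfl (fun k hk => by
      rw [Finset.mem_Icc] at hk
      exact term (k + 1) (by omega) (by omega) k (by omega) (by omega))

end Expand
end CMJ

namespace CMJ
section Ideal

variable {BX BY S : Type*} [Ring BX] [Ring BY] [Ring S]
variable {h : ℕ → BY →+* S} {tY : BY} {L : TwoSidedIdeal S} {M : ℕ}

lemma smul_mem'' [Algebra ℂ S] {x : S} (z : ℂ) (hx : x ∈ L) : z • x ∈ L := by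
  rw [Algebra.smul_def]
  exact L.mul_mem_left _ _ hx

lemma sum_mem'' {ι : Type*} {s : Finset ι} {f : ι → S} (hf : ∀ i ∈ s, f i ∈ L) :
    ∑ i ∈ s, f i ∈ L :=
  sum_mem hf

lemma K2 (hL : ∀ k, 1 ≤ k → k ≤ M + 1 → h k (tY * (1 - tY)) ∈ L)
    {c : ℕ → ℕ} (hc : 1 ≤ c (M + 1)) :
    siteProd h (fun l => tY ^ c l) 1 (M + 1) * (1 - h (M + 1) tY) ∈ L := by
  obtain ⟨d, hd⟩ : ∃ d, c (M + 1) = d + 1 := ⟨c (M + 1) - 1, by omega⟩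
  have hsplit : siteProd h (fun l => tY ^ c l) 1 (M + 1) =
      ordProd (fun l => h l (tY ^ c l)) 1 M * h (M + 1) (tY ^ c (M + 1)) := by
    unfold siteProd
    rw [ordProd_split _ (show (1 : ℕ) ≤ M + 1 by omega) (show M ≤ M + 1 by omega),
      ordProd_single]
  rw [hsplit, mul_assoc]
  apply L.mul_mem_left
  have hby : tY ^ c (M + 1) * (1 - tY) = tY ^ d * (tY * (1 - tY)) := by
    rw [hd, pow_succ, mul_assoc]
  have key : h (M + 1) (tY ^ c (M + 1)) * (1 - h (M + 1) tY) =
      h (M + 1) (tY ^ d) * h (M + 1) (tY * (1 - tY)) := by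
    rw [← map_mul, ← hby, map_mul, map_sub, map_one]
  rw [key]
  exact L.mul_mem_left _ _ (hL (M + 1) (by omega) le_rfl)

variable {gX : ℕ → BX →+* S}

lemma KZ1 (hL : ∀ k, 1 ≤ k → k ≤ M + 1 → h k (tY * (1 - tY)) ∈ L) (β : BX) :
    jGen gX h tY (M + 1) β * (1 - h (M + 1) tY) ∈ L := by
  unfold jGen
  rw [Finset.sum_mul]
  apply sum_mem''
  intro k hk
  rw [Finset.mem_Icc] at hk
  rw [mul_assoc]
  apply L.mul_mem_left
  rw [tBlock_eq hk.1 hk.2]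
  exact K2 hL (by rw [if_pos hk.2])

lemma KZlist (hL : ∀ k, 1 ≤ k → k ≤ M + 1 → h k (tY * (1 - tY)) ∈ L)
    (as : List BX) (hne : as ≠ []) :
    (as.map (jGen gX h tY (M + 1))).prod * (1 - h (M + 1) tY) ∈ L := by
  obtain ⟨init, last, rfl⟩ : ∃ init last, as = init ++ [last] :=
    ⟨as.dropLast, as.getLast hne, (List.dropLast_append_getLast hne).symm⟩
  rw [List.map_append, List.prod_append, List.map_singleton, List.prod_singleton, mul_assoc]
  exact L.mul_mem_left _ _ (KZ1 hL last)

lemma spY_mul_u (hhh : ∀ k k', k ≠ k' → ∀ x y, Commute (h k x) (h k' y)) (c : ℕ → ℕ) :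
    siteProd h (fun l => tY ^ c l) 1 (M + 1) * (1 - h (M + 1) tY) =
      siteProd h (fun l => tY ^ c l) 1 (M + 1) -
        siteProd h (fun l => tY ^ ((if M + 1 ≤ l then 1 else 0) + c l)) 1 (M + 1) := by
  rw [mul_one_sub]
  congr 1
  rw [siteProd_mul_right hhh (by omega) (by omega) le_rfl]
  apply siteProd_congr
  intro l hl1 hl2
  by_cases hl : l = M + 1
  · subst hl
    rw [Function.update_self, ← pow_succ, Nat.add_comm, if_pos le_rfl]
  · rw [Function.update_of_ne hl, if_neg (by omega), Nat.zero_add]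

lemma u_comm_spY (hhh : ∀ k k', k ≠ k' → ∀ x y, Commute (h k x) (h k' y)) (c : ℕ → ℕ) :
    Commute (1 - h (M + 1) tY) (siteProd h (fun l => tY ^ c l) 1 (M + 1)) := by
  refine Commute.sub_left (Commute.one_left _) ?_
  apply commute_ordProd
  intro l _ _
  by_cases hl : (M + 1) = l
  · subst hl
    rw [map_pow]
    exact (Commute.refl _).pow_right _
  · exact hhh (M + 1) l hl _ _

end Ideal
end CMJ

namespace CMJ

theorem core {BX BY T T' : Type*} [Ring BX] [Ring BY] [Ring T] [Ring T']
    [Algebra ℂ T] [Algebra ℂ T']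
    (M : ℕ)
    (eX : ℕ → BX →+* T) (eY : ℕ → BY →+* T)
    (fX : ℕ → BX →+* T') (fY : ℕ → BY →+* T')
    (hXX : ∀ k k', k ≠ k' → ∀ x y, Commute (eX k x) (eX k' y))
    (hYY : ∀ k k', k ≠ k' → ∀ x y, Commute (eY k x) (eY k' y))
    (hXY : ∀ k k' x y, Commute (eX k x) (eY k' y))
    (hfXX : ∀ k k', k ≠ k' → ∀ x y, Commute (fX k x) (fX k' y))
    (hfYY : ∀ k k', k ≠ k' → ∀ x y, Commute (fY k x) (fY k' y))
    (hfXY : ∀ k k' x y, Commute (fX k x) (fY k' y))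
    (tY : BY) (ψX : BX → ℂ) (ψY : BY → ℂ)
    (hψX1 : ψX 1 = 1) (hψY : ∀ n : ℕ, ψY (tY ^ n) = 1)
    (Ψ : T →ₗ[ℂ] T')
    (hΨ : ∀ (x : ℕ → BX) (y : ℕ → BY),
      Ψ (siteProd eX x 1 (M + 2) * siteProd eY y 1 (M + 2)) =
        (ψX (x (M + 2)) * ψY (y (M + 2))) •
          (siteProd fX x 1 (M + 1) * siteProd fY y 1 (M + 1)))
    (L : TwoSidedIdeal T')
    (hL : ∀ k, 1 ≤ k → k ≤ M + 1 → fY k (tY * (1 - tY)) ∈ L)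
    (as : List BX) (hne : as ≠ []) :
    Ψ ((as.map (jGen eX eY tY (M + 2))).prod) -
      ((as.map (jGen fX fY tY (M + 1))).prod + ψX as.prod • (1 - fY (M + 1) tY)) ∈ L := by
  have hev : ∀ (b' : ℕ → BX) (c' : ℕ → ℕ),
      Ψ (siteProd eX b' 1 (M + 2) * siteProd eY (fun l => tY ^ c' l) 1 (M + 2)) =
        ψX (b' (M + 2)) •
          (siteProd fX b' 1 (M + 1) * siteProd fY (fun l => tY ^ c' l) 1 (M + 1)) := by
    intro b' c'
    rw [hΨ b' (fun l => tY ^ c' l), hψY (c' (M + 2)), mul_one]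
  have hsp'm : ∀ (b' : ℕ → BX) (z : BX),
      siteProd fX (Function.update b' (M + 2) z) 1 (M + 1) = siteProd fX b' 1 (M + 1) :=
    fun b' z => siteProd_congr (fun l _ hl2 => Function.update_of_ne (by omega) _ _)
  have hspY'm : ∀ (c' : ℕ → ℕ),
      siteProd fY (fun l => tY ^ ((if M + 2 ≤ l then 1 else 0) + c' l)) 1 (M + 1) =
        siteProd fY (fun l => tY ^ c' l) 1 (M + 1) :=
    fun c' => siteProd_congr (fun l _ hl2 => by rw [if_neg (by omega), Nat.zero_add])
  have H : ∀ (as : List BX), as ≠ [] → ∀ (b : ℕ → BX) (c : ℕ → ℕ),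
      (∀ l, 1 ≤ l → l ≤ M → c l ≤ c (l + 1)) →
      Ψ (siteProd eX b 1 (M + 2) * (as.map (jGen eX eY tY (M + 2))).prod *
          siteProd eY (fun l => tY ^ c l) 1 (M + 2)) -
        (ψX (b (M + 2)) • (siteProd fX b 1 (M + 1) * (as.map (jGen fX fY tY (M + 1))).prod *
            siteProd fY (fun l => tY ^ c l) 1 (M + 1)) +
          ψX (b (M + 2) * as.prod) • (siteProd fX b 1 (M + 1) *
            siteProd fY (fun l => tY ^ c l) 1 (M + 1) * (1 - fY (M + 1) tY))) ∈ L := by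
    intro as
    induction as with
    | nil => exact fun h => absurd rfl h
    | cons α rest ih =>
      intro _ b c hc
      by_cases hrest : rest = []
      · -- base case : a single letter
        subst hrest
        simp only [List.map_cons, List.map_nil, List.prod_cons, List.prod_nil, mul_one]
        have expand := F1 (tY := tY) hXX hYY (M + 1) b c 1 (fun s n => Commute.one_right _) α
        rw [show M + 1 + 1 = M + 2 by omega] at expand
        simp only [mul_one] at expand
        have expand' := F1 (tY := tY) hfXX hfYY M b c 1 (fun s n => Commute.one_right _) α
        simp only [mul_one] at expand'
        have key : Ψ (siteProd eX b 1 (M + 2) * jGen eX eY tY (M + 2) α *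
              siteProd eY (fun l => tY ^ c l) 1 (M + 2)) =
            ψX (b (M + 2)) • (siteProd fX b 1 (M + 1) * jGen fX fY tY (M + 1) α *
                siteProd fY (fun l => tY ^ c l) 1 (M + 1)) +
              ψX (b (M + 2) * α) • (siteProd fX b 1 (M + 1) *
                siteProd fY (fun l => tY ^ c l) 1 (M + 1) * (1 - fY (M + 1) tY)) := by
          calc Ψ (siteProd eX b 1 (M + 2) * jGen eX eY tY (M + 2) α *
                siteProd eY (fun l => tY ^ c l) 1 (M + 2))
              = (∑ k ∈ Finset.Icc 1 (M + 2), ψX (Function.update b k (b k * α) (M + 2)) •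
                  (siteProd fX (Function.update b k (b k * α)) 1 (M + 1) *
                    siteProd fY (fun l => tY ^ ((if k ≤ l then 1 else 0) + c l)) 1 (M + 1)))
                - ∑ k ∈ Finset.Icc 1 (M + 1), ψX (Function.update b (k + 1) (b (k + 1) * α) (M + 2)) •
                  (siteProd fX (Function.update b (k + 1) (b (k + 1) * α)) 1 (M + 1) *
                    siteProd fY (fun l => tY ^ ((if k ≤ l then 1 else 0) + c l)) 1 (M + 1)) := by
                rw [expand, map_sub, map_sum, map_sum]
                congr 1 <;> exact Finset.sum_congr rfl fun k _ => hev _ _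
            _ = ((∑ k ∈ Finset.Icc 1 (M + 1), ψX (b (M + 2)) •
                  (siteProd fX (Function.update b k (b k * α)) 1 (M + 1) *
                    siteProd fY (fun l => tY ^ ((if k ≤ l then 1 else 0) + c l)) 1 (M + 1)))
                + ψX (b (M + 2) * α) •
                  (siteProd fX b 1 (M + 1) * siteProd fY (fun l => tY ^ c l) 1 (M + 1)))
                - ((∑ k ∈ Finset.Icc 1 M, ψX (b (M + 2)) •
                  (siteProd fX (Function.update b (k + 1) (b (k + 1) * α)) 1 (M + 1) *
                    siteProd fY (fun l => tY ^ ((if k ≤ l then 1 else 0) + c l)) 1 (M + 1)))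
                + ψX (b (M + 2) * α) •
                  (siteProd fX b 1 (M + 1) *
                    siteProd fY (fun l => tY ^ ((if M + 1 ≤ l then 1 else 0) + c l)) 1 (M + 1))) := by
                congr 1
                · rw [Finset.sum_Icc_succ_top (show (1 : ℕ) ≤ M + 2 by omega)]
                  congr 1
                  · exact Finset.sum_congr rfl fun k hk => by
                      rw [Finset.mem_Icc] at hk
                      rw [Function.update_of_ne (show (M + 2 : ℕ) ≠ k by omega)]
                  · rw [Function.update_self, hsp'm, hspY'm]
                · rw [Finset.sum_Icc_succ_top (show (1 : ℕ) ≤ M + 1 by omega)]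
                  congr 1
                  · exact Finset.sum_congr rfl fun k hk => by
                      rw [Finset.mem_Icc] at hk
                      rw [Function.update_of_ne (show (M + 2 : ℕ) ≠ k + 1 by omega)]
                  · rw [show M + 1 + 1 = M + 2 by omega, Function.update_self, hsp'm]
            _ = ψX (b (M + 2)) • (siteProd fX b 1 (M + 1) * jGen fX fY tY (M + 1) α *
                  siteProd fY (fun l => tY ^ c l) 1 (M + 1)) +
                ψX (b (M + 2) * α) • (siteProd fX b 1 (M + 1) *
                  siteProd fY (fun l => tY ^ c l) 1 (M + 1) * (1 - fY (M + 1) tY)) := by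
                rw [expand', smul_sub, Finset.smul_sum, Finset.smul_sum]
                rw [mul_assoc (siteProd fX b 1 (M + 1)), spY_mul_u hfYY c, mul_sub, smul_sub]
                abel
        rw [key]
        rw [sub_self]
        exact L.zero_mem
      · -- inductive step
        simp only [List.map_cons, List.prod_cons]
        have hZe : ∀ (s n : ℕ), Commute (eY s (tY ^ n))
            ((rest.map (jGen eX eY tY (M + 2))).prod) :=
          commute_hpow_prodjGen hYY hXY (M + 2) rest
        have hZf : ∀ (s n : ℕ), Commute (fY s (tY ^ n))
            ((rest.map (jGen fX fY tY (M + 1))).prod) :=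
          commute_hpow_prodjGen hfYY hfXY (M + 1) rest
        have expand := F1 (tY := tY) hXX hYY (M + 1) b c
          ((rest.map (jGen eX eY tY (M + 2))).prod) hZe α
        rw [show M + 1 + 1 = M + 2 by omega] at expand
        have expand' := F1 (tY := tY) hfXX hfYY M b c
          ((rest.map (jGen fX fY tY (M + 1))).prod) hZf α
        have m1 : Ψ (siteProd eX b 1 (M + 2) *
              (jGen eX eY tY (M + 2) α * (rest.map (jGen eX eY tY (M + 2))).prod) *
              siteProd eY (fun l => tY ^ c l) 1 (M + 2)) =
            (∑ k ∈ Finset.Icc 1 (M + 2),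
              Ψ (siteProd eX (Function.update b k (b k * α)) 1 (M + 2) *
                (rest.map (jGen eX eY tY (M + 2))).prod *
                siteProd eY (fun l => tY ^ ((if k ≤ l then 1 else 0) + c l)) 1 (M + 2)))
            - ∑ k ∈ Finset.Icc 1 (M + 1),
              Ψ (siteProd eX (Function.update b (k + 1) (b (k + 1) * α)) 1 (M + 2) *
                (rest.map (jGen eX eY tY (M + 2))).prod *
                siteProd eY (fun l => tY ^ ((if k ≤ l then 1 else 0) + c l)) 1 (M + 2)) := by
          rw [← mul_assoc (siteProd eX b 1 (M + 2)) (jGen eX eY tY (M + 2) α), expand,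
            map_sub, map_sum, map_sum]
        have hV1 : (∑ k ∈ Finset.Icc 1 (M + 2),
              (ψX (Function.update b k (b k * α) (M + 2)) •
                (siteProd fX (Function.update b k (b k * α)) 1 (M + 1) *
                  (rest.map (jGen fX fY tY (M + 1))).prod *
                  siteProd fY (fun l => tY ^ ((if k ≤ l then 1 else 0) + c l)) 1 (M + 1)) +
              ψX (Function.update b k (b k * α) (M + 2) * rest.prod) •
                (siteProd fX (Function.update b k (b k * α)) 1 (M + 1) *
                  siteProd fY (fun l => tY ^ ((if k ≤ l then 1 else 0) + c l)) 1 (M + 1) *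
                  (1 - fY (M + 1) tY)))) =
            ((∑ k ∈ Finset.Icc 1 (M + 1), ψX (b (M + 2)) •
                (siteProd fX (Function.update b k (b k * α)) 1 (M + 1) *
                  (rest.map (jGen fX fY tY (M + 1))).prod *
                  siteProd fY (fun l => tY ^ ((if k ≤ l then 1 else 0) + c l)) 1 (M + 1)))
              + ∑ k ∈ Finset.Icc 1 (M + 1), ψX (b (M + 2) * rest.prod) •
                (siteProd fX (Function.update b k (b k * α)) 1 (M + 1) *
                  siteProd fY (fun l => tY ^ ((if k ≤ l then 1 else 0) + c l)) 1 (M + 1) *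
                  (1 - fY (M + 1) tY)))
            + (ψX (b (M + 2) * α) •
                (siteProd fX b 1 (M + 1) * (rest.map (jGen fX fY tY (M + 1))).prod *
                  siteProd fY (fun l => tY ^ c l) 1 (M + 1))
              + ψX (b (M + 2) * α * rest.prod) •
                (siteProd fX b 1 (M + 1) * siteProd fY (fun l => tY ^ c l) 1 (M + 1) *
                  (1 - fY (M + 1) tY))) := by
          rw [Finset.sum_Icc_succ_top (show (1 : ℕ) ≤ M + 2 by omega)]
          congr 1
          · rw [← Finset.sum_add_distrib]
            refine Finset.sum_congr rfl fun k hk => ?_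
            rw [Finset.mem_Icc] at hk
            rw [Function.update_of_ne (show (M + 2 : ℕ) ≠ k by omega)]
          · simp only [Function.update_self, hsp'm, hspY'm]
        have hV2 : (∑ k ∈ Finset.Icc 1 (M + 1),
              (ψX (Function.update b (k + 1) (b (k + 1) * α) (M + 2)) •
                (siteProd fX (Function.update b (k + 1) (b (k + 1) * α)) 1 (M + 1) *
                  (rest.map (jGen fX fY tY (M + 1))).prod *
                  siteProd fY (fun l => tY ^ ((if k ≤ l then 1 else 0) + c l)) 1 (M + 1)) +
              ψX (Function.update b (k + 1) (b (k + 1) * α) (M + 2) * rest.prod) •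
                (siteProd fX (Function.update b (k + 1) (b (k + 1) * α)) 1 (M + 1) *
                  siteProd fY (fun l => tY ^ ((if k ≤ l then 1 else 0) + c l)) 1 (M + 1) *
                  (1 - fY (M + 1) tY)))) =
            ((∑ k ∈ Finset.Icc 1 M, ψX (b (M + 2)) •
                (siteProd fX (Function.update b (k + 1) (b (k + 1) * α)) 1 (M + 1) *
                  (rest.map (jGen fX fY tY (M + 1))).prod *
                  siteProd fY (fun l => tY ^ ((if k ≤ l then 1 else 0) + c l)) 1 (M + 1)))
              + ∑ k ∈ Finset.Icc 1 M, ψX (b (M + 2) * rest.prod) •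
                (siteProd fX (Function.update b (k + 1) (b (k + 1) * α)) 1 (M + 1) *
                  siteProd fY (fun l => tY ^ ((if k ≤ l then 1 else 0) + c l)) 1 (M + 1) *
                  (1 - fY (M + 1) tY)))
            + (ψX (b (M + 2) * α) •
                (siteProd fX b 1 (M + 1) * (rest.map (jGen fX fY tY (M + 1))).prod *
                  siteProd fY (fun l => tY ^ ((if M + 1 ≤ l then 1 else 0) + c l)) 1 (M + 1))
              + ψX (b (M + 2) * α * rest.prod) •
                (siteProd fX b 1 (M + 1) *
                  siteProd fY (fun l => tY ^ ((if M + 1 ≤ l then 1 else 0) + c l)) 1 (M + 1) *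
                  (1 - fY (M + 1) tY))) := by
          rw [Finset.sum_Icc_succ_top (show (1 : ℕ) ≤ M + 1 by omega)]
          congr 1
          · rw [← Finset.sum_add_distrib]
            refine Finset.sum_congr rfl fun k hk => ?_
            rw [Finset.mem_Icc] at hk
            rw [Function.update_of_ne (show (M + 2 : ℕ) ≠ k + 1 by omega)]
          · simp only [show M + 1 + 1 = M + 2 by omega, Function.update_self, hsp'm, hspY'm]
        have hT1 : (∑ k ∈ Finset.Icc 1 (M + 1), ψX (b (M + 2)) •
                (siteProd fX (Function.update b k (b k * α)) 1 (M + 1) *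
                  (rest.map (jGen fX fY tY (M + 1))).prod *
                  siteProd fY (fun l => tY ^ ((if k ≤ l then 1 else 0) + c l)) 1 (M + 1)))
              - (∑ k ∈ Finset.Icc 1 M, ψX (b (M + 2)) •
                (siteProd fX (Function.update b (k + 1) (b (k + 1) * α)) 1 (M + 1) *
                  (rest.map (jGen fX fY tY (M + 1))).prod *
                  siteProd fY (fun l => tY ^ ((if k ≤ l then 1 else 0) + c l)) 1 (M + 1))) =
            ψX (b (M + 2)) • (siteProd fX b 1 (M + 1) *
              (jGen fX fY tY (M + 1) α * (rest.map (jGen fX fY tY (M + 1))).prod) *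
              siteProd fY (fun l => tY ^ c l) 1 (M + 1)) := by
          rw [← mul_assoc (siteProd fX b 1 (M + 1)) (jGen fX fY tY (M + 1) α), expand',
            smul_sub, Finset.smul_sum, Finset.smul_sum]
        have hJP : (ψX (b (M + 2) * α) •
              (siteProd fX b 1 (M + 1) * (rest.map (jGen fX fY tY (M + 1))).prod *
                siteProd fY (fun l => tY ^ c l) 1 (M + 1)))
            - (ψX (b (M + 2) * α) •
              (siteProd fX b 1 (M + 1) * (rest.map (jGen fX fY tY (M + 1))).prod *
                siteProd fY (fun l => tY ^ ((if M + 1 ≤ l then 1 else 0) + c l)) 1 (M + 1))) ∈ L := by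
          have heq : (ψX (b (M + 2) * α) •
              (siteProd fX b 1 (M + 1) * (rest.map (jGen fX fY tY (M + 1))).prod *
                siteProd fY (fun l => tY ^ c l) 1 (M + 1)))
            - (ψX (b (M + 2) * α) •
              (siteProd fX b 1 (M + 1) * (rest.map (jGen fX fY tY (M + 1))).prod *
                siteProd fY (fun l => tY ^ ((if M + 1 ≤ l then 1 else 0) + c l)) 1 (M + 1))) =
              ψX (b (M + 2) * α) • (siteProd fX b 1 (M + 1) *
                (((rest.map (jGen fX fY tY (M + 1))).prod * (1 - fY (M + 1) tY)) *
                  siteProd fY (fun l => tY ^ c l) 1 (M + 1))) := by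
            rw [← smul_sub, ← mul_sub, ← spY_mul_u hfYY c, ← (u_comm_spY hfYY c).eq,
              mul_assoc (siteProd fX b 1 (M + 1)),
              ← mul_assoc ((rest.map (jGen fX fY tY (M + 1))).prod) (1 - fY (M + 1) tY)]
          rw [heq]
          exact smul_mem'' _ (L.mul_mem_left _ _ (L.mul_mem_right _ _ (KZlist hL rest hrest)))
        have hSB : (∑ k ∈ Finset.Icc 1 (M + 1), ψX (b (M + 2) * rest.prod) •
              (siteProd fX (Function.update b k (b k * α)) 1 (M + 1) *
                siteProd fY (fun l => tY ^ ((if k ≤ l then 1 else 0) + c l)) 1 (M + 1) *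
                (1 - fY (M + 1) tY))) ∈ L := by
          refine sum_mem'' fun k hk => ?_
          rw [Finset.mem_Icc] at hk
          rw [mul_assoc]
          exact smul_mem'' _ (L.mul_mem_left _ _ (K2 hL (by rw [if_pos hk.2]; omega)))
        have hSB' : (∑ k ∈ Finset.Icc 1 M, ψX (b (M + 2) * rest.prod) •
              (siteProd fX (Function.update b (k + 1) (b (k + 1) * α)) 1 (M + 1) *
                siteProd fY (fun l => tY ^ ((if k ≤ l then 1 else 0) + c l)) 1 (M + 1) *
                (1 - fY (M + 1) tY))) ∈ L := by
          refine sum_mem'' fun k hk => ?_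
          rw [Finset.mem_Icc] at hk
          rw [mul_assoc]
          exact smul_mem'' _
            (L.mul_mem_left _ _ (K2 hL (by rw [if_pos (show k ≤ M + 1 by omega)]; omega)))
        have hBtop' : (ψX (b (M + 2) * α * rest.prod) •
              (siteProd fX b 1 (M + 1) *
                siteProd fY (fun l => tY ^ ((if M + 1 ≤ l then 1 else 0) + c l)) 1 (M + 1) *
                (1 - fY (M + 1) tY))) ∈ L := by
          rw [mul_assoc (siteProd fX b 1 (M + 1))]
          exact smul_mem'' _
            (L.mul_mem_left _ _ (K2 hL (by rw [if_pos (le_refl (M + 1))]; omega)))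
        have final : Ψ (siteProd eX b 1 (M + 2) *
              (jGen eX eY tY (M + 2) α * (rest.map (jGen eX eY tY (M + 2))).prod) *
              siteProd eY (fun l => tY ^ c l) 1 (M + 2)) -
            (ψX (b (M + 2)) • (siteProd fX b 1 (M + 1) *
                (jGen fX fY tY (M + 1) α * (rest.map (jGen fX fY tY (M + 1))).prod) *
                siteProd fY (fun l => tY ^ c l) 1 (M + 1)) +
              ψX (b (M + 2) * (α * rest.prod)) •
                (siteProd fX b 1 (M + 1) * siteProd fY (fun l => tY ^ c l) 1 (M + 1) *
                  (1 - fY (M + 1) tY))) =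
            ((∑ k ∈ Finset.Icc 1 (M + 2),
              (Ψ (siteProd eX (Function.update b k (b k * α)) 1 (M + 2) *
                (rest.map (jGen eX eY tY (M + 2))).prod *
                siteProd eY (fun l => tY ^ ((if k ≤ l then 1 else 0) + c l)) 1 (M + 2)) -
              (ψX (Function.update b k (b k * α) (M + 2)) •
                (siteProd fX (Function.update b k (b k * α)) 1 (M + 1) *
                  (rest.map (jGen fX fY tY (M + 1))).prod *
                  siteProd fY (fun l => tY ^ ((if k ≤ l then 1 else 0) + c l)) 1 (M + 1)) +
              ψX (Function.update b k (b k * α) (M + 2) * rest.prod) •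
                (siteProd fX (Function.update b k (b k * α)) 1 (M + 1) *
                  siteProd fY (fun l => tY ^ ((if k ≤ l then 1 else 0) + c l)) 1 (M + 1) *
                  (1 - fY (M + 1) tY)))))
            - ∑ k ∈ Finset.Icc 1 (M + 1),
              (Ψ (siteProd eX (Function.update b (k + 1) (b (k + 1) * α)) 1 (M + 2) *
                (rest.map (jGen eX eY tY (M + 2))).prod *
                siteProd eY (fun l => tY ^ ((if k ≤ l then 1 else 0) + c l)) 1 (M + 2)) -
              (ψX (Function.update b (k + 1) (b (k + 1) * α) (M + 2)) •
                (siteProd fX (Function.update b (k + 1) (b (k + 1) * α)) 1 (M + 1) *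
                  (rest.map (jGen fX fY tY (M + 1))).prod *
                  siteProd fY (fun l => tY ^ ((if k ≤ l then 1 else 0) + c l)) 1 (M + 1)) +
              ψX (Function.update b (k + 1) (b (k + 1) * α) (M + 2) * rest.prod) •
                (siteProd fX (Function.update b (k + 1) (b (k + 1) * α)) 1 (M + 1) *
                  siteProd fY (fun l => tY ^ ((if k ≤ l then 1 else 0) + c l)) 1 (M + 1) *
                  (1 - fY (M + 1) tY)))))
            + (((ψX (b (M + 2) * α) •
              (siteProd fX b 1 (M + 1) * (rest.map (jGen fX fY tY (M + 1))).prod *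
                siteProd fY (fun l => tY ^ c l) 1 (M + 1)))
            - (ψX (b (M + 2) * α) •
              (siteProd fX b 1 (M + 1) * (rest.map (jGen fX fY tY (M + 1))).prod *
                siteProd fY (fun l => tY ^ ((if M + 1 ≤ l then 1 else 0) + c l)) 1 (M + 1))))
            + ((∑ k ∈ Finset.Icc 1 (M + 1), ψX (b (M + 2) * rest.prod) •
              (siteProd fX (Function.update b k (b k * α)) 1 (M + 1) *
                siteProd fY (fun l => tY ^ ((if k ≤ l then 1 else 0) + c l)) 1 (M + 1) *
                (1 - fY (M + 1) tY)))
            - ((∑ k ∈ Finset.Icc 1 M, ψX (b (M + 2) * rest.prod) •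
              (siteProd fX (Function.update b (k + 1) (b (k + 1) * α)) 1 (M + 1) *
                siteProd fY (fun l => tY ^ ((if k ≤ l then 1 else 0) + c l)) 1 (M + 1) *
                (1 - fY (M + 1) tY)))
              + ψX (b (M + 2) * α * rest.prod) •
              (siteProd fX b 1 (M + 1) *
                siteProd fY (fun l => tY ^ ((if M + 1 ≤ l then 1 else 0) + c l)) 1 (M + 1) *
                (1 - fY (M + 1) tY))))) := by
          rw [m1, Finset.sum_sub_distrib, Finset.sum_sub_distrib, hV1, hV2, ← hT1,
            ← mul_assoc (b (M + 2)) α rest.prod]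
          abel
        rw [final]
        refine L.add_mem (L.sub_mem (sum_mem'' fun k hk => ?_) (sum_mem'' fun k hk => ?_))
          (L.add_mem hJP (L.sub_mem hSB (L.add_mem hSB' hBtop')))
        · exact ih hrest (Function.update b k (b k * α))
            (fun l => (if k ≤ l then 1 else 0) + c l)
            (fun l hl1 hl2 => by have := hc l hl1 hl2; split_ifs <;> omega)
        · exact ih hrest (Function.update b (k + 1) (b (k + 1) * α))
            (fun l => (if k ≤ l then 1 else 0) + c l)
            (fun l hl1 hl2 => by have := hc l hl1 hl2; split_ifs <;> omega)
  have h0 := H as hne (fun _ => 1) (fun _ => 0) (fun _ _ _ => le_rfl)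
  have e1 : siteProd eX (fun _ => (1 : BX)) 1 (M + 2) = 1 := siteProd_one
  have e2 : siteProd eY (fun _ => tY ^ (0 : ℕ)) 1 (M + 2) = 1 := by
    rw [siteProd_congr (x' := fun _ => 1) (fun l _ _ => pow_zero tY), siteProd_one]
  have e3 : siteProd fX (fun _ => (1 : BX)) 1 (M + 1) = 1 := siteProd_one
  have e4 : siteProd fY (fun _ => tY ^ (0 : ℕ)) 1 (M + 1) = 1 := by
    rw [siteProd_congr (x' := fun _ => 1) (fun l _ _ => pow_zero tY), siteProd_one]
  rw [e1, e2, e3, e4] at h0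
  simp only [one_mul, mul_one, hψX1, one_smul] at h0
  exact h0

end CMJ

theorem condition_map_on_j
    {A B : Fin 2 → Type*} {T T' : Type*}
    [∀ i, Ring (A i)] [∀ i, Algebra ℂ (A i)] [∀ i, StarRing (A i)] [∀ i, StarModule ℂ (A i)]
    [∀ i, Ring (B i)] [∀ i, Algebra ℂ (B i)] [∀ i, StarRing (B i)] [∀ i, StarModule ℂ (B i)]
    [Ring T] [Algebra ℂ T] [StarRing T] [StarModule ℂ T]
    [Ring T'] [Algebra ℂ T'] [StarRing T'] [StarModule ℂ T']
    (G : ∀ i, Set (A i)) (hG : ∀ i, ∀ x ∈ G i, star x ∈ G i)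
    (hA : ∀ i, Algebra.adjoin ℂ (G i) = ⊤)
    (ι : ∀ i, A i →⋆ₐ[ℂ] B i) (t : ∀ i, B i) (ht : ∀ i, star (t i) = t i)
    (hB : ∀ i, Algebra.adjoin ℂ (Set.range (ι i) ∪ {t i}) = ⊤)
    (m : ℕ) (hm : 2 ≤ m)
    (e : ∀ i, ℕ → B i →⋆ₐ[ℂ] T)
    (hcomm : ∀ (i i' : Fin 2) (k k' : ℕ), (i, k) ≠ (i', k') →
      ∀ (x : B i) (y : B i'), Commute (e i k x) (e i' k' y))
    (hT : Algebra.adjoin ℂ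
      {x : T | ∃ (i : Fin 2) (k : ℕ), 1 ≤ k ∧ k ≤ m ∧ ∃ b : B i, x = e i k b} = ⊤)
    (f : ∀ i, ℕ → B i →⋆ₐ[ℂ] T')
    (hcomm' : ∀ (i i' : Fin 2) (k k' : ℕ), (i, k) ≠ (i', k') →
      ∀ (x : B i) (y : B i'), Commute (f i k x) (f i' k' y))
    (hT' : Algebra.adjoin ℂ
      {x : T' | ∃ (i : Fin 2) (k : ℕ), 1 ≤ k ∧ k ≤ m - 1 ∧ ∃ b : B i, x = f i k b} = ⊤)
    -- the states `ψᵢ` and their Boolean extensions `ψt i`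
    (ψ : ∀ i, A i →ₗ[ℂ] ℂ) (hψ : ∀ i, IsState (ψ i))
    (ψt : ∀ i, B i →ₗ[ℂ] ℂ)
    (hψt : ∀ i, IsBooleanExt (G i) (⇑(ι i)) (t i) (ψ i) (ψt i))
    -- the condition map `Ψ^{(m)} = id^{⊗(m-1)} ⊗ ψ̃₁ ⊗ id^{⊗(m-1)} ⊗ ψ̃₂`
    (Ψ : T →ₗ[ℂ] T')
    (hΨ : ∀ (x : ℕ → B 0) (y : ℕ → B 1),
      Ψ (ordProd (fun k => e 0 k (x k)) 1 m * ordProd (fun k => e 1 k (y k)) 1 m) =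
        (ψt 0 (x m) * ψt 1 (y m)) •
          (ordProd (fun k => f 0 k (x k)) 1 (m - 1) * ordProd (fun k => f 1 k (y k)) 1 (m - 1)))
    -- the *-homomorphisms `j^{(m)}` and `j^{(m-1)}`
    (j : ∀ i, A i →⋆ₐ[ℂ] T)
    (hj1 : ∀ a ∈ G 0, j 0 a = ∑ k ∈ Finset.Icc 1 m,
      (embSite (fun l x => e 0 l x) m k (ι 0 a) - embSite (fun l x => e 0 l x) m (k + 1) (ι 0 a)) *
        tBlock (fun l => e 1 l (t 1)) k m)
    (hj2 : ∀ b ∈ G 1, j 1 b = ∑ k ∈ Finset.Icc 1 m,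
      tBlock (fun l => e 0 l (t 0)) k m *
        (embSite (fun l x => e 1 l x) m k (ι 1 b) - embSite (fun l x => e 1 l x) m (k + 1) (ι 1 b)))
    (j' : ∀ i, A i →⋆ₐ[ℂ] T')
    (hj1' : ∀ a ∈ G 0, j' 0 a = ∑ k ∈ Finset.Icc 1 (m - 1),
      (embSite (fun l x => f 0 l x) (m - 1) k (ι 0 a) -
        embSite (fun l x => f 0 l x) (m - 1) (k + 1) (ι 0 a)) *
          tBlock (fun l => f 1 l (t 1)) k (m - 1))
    (hj2' : ∀ b ∈ G 1, j' 1 b = ∑ k ∈ Finset.Icc 1 (m - 1),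
      tBlock (fun l => f 0 l (t 0)) k (m - 1) *
        (embSite (fun l x => f 1 l x) (m - 1) k (ι 1 b) -
          embSite (fun l x => f 1 l x) (m - 1) (k + 1) (ι 1 b)))
    -- the two-sided *-ideal `L^{(m-1)}`
    (L' : TwoSidedIdeal T')
    (hL' : L' = TwoSidedIdeal.span
      {x : T' | ∃ (i : Fin 2) (k : ℕ), 1 ≤ k ∧ k ≤ m - 1 ∧ x = f i k (t i * (1 - t i))})
    -- non-empty words `w`, `v` in `𝒜₁`, `𝒜₂`
    (w : A 0) (v : A 1) (hw : IsWord (G 0) w) (hv : IsWord (G 1) v) :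
    -- `(Ψ^{(m)} ∘ j₁^{(m)})(w) = j₁^{(m-1)}(w) + g₁^{(m-1)}(w)  (mod L^{(m-1)})`
    Ψ (j 0 w) - (j' 0 w + ψ 0 w • f 1 (m - 1) (1 - t 1)) ∈ L'
    ∧
    -- `(Ψ^{(m)} ∘ j₂^{(m)})(v) = j₂^{(m-1)}(v) + g₂^{(m-1)}(v)  (mod L^{(m-1)})`
    Ψ (j 1 v) - (j' 1 v + ψ 1 v • f 0 (m - 1) (1 - t 0)) ∈ L' := by
  obtain ⟨M, rfl⟩ : ∃ M, m = M + 2 := ⟨m - 2, by omega⟩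
  have hm1 : M + 2 - 1 = M + 1 := by omega
  simp only [hm1] at hΨ hj1' hj2' hL' ⊢
  have hne2 : ∀ (k k' : ℕ), ((0 : Fin 2), k) ≠ ((1 : Fin 2), k') :=
    fun k k' hp => (by decide : ¬((0 : Fin 2) = 1)) (congrArg Prod.fst hp)
  have hne2' : ∀ (k k' : ℕ), ((1 : Fin 2), k) ≠ ((0 : Fin 2), k') :=
    fun k k' hp => (by decide : ¬((1 : Fin 2) = 0)) (congrArg Prod.fst hp)
  constructor
  · -- first component
    obtain ⟨lw, hlwne, hlwG, rfl⟩ := hw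
    have hXX : ∀ k k', k ≠ k' → ∀ x y, Commute ((e 0 k).toAlgHom.toRingHom x)
        ((e 0 k').toAlgHom.toRingHom y) :=
      fun k k' hkk x y => hcomm 0 0 k k' (fun hp => hkk (congrArg Prod.snd hp)) x y
    have hYY : ∀ k k', k ≠ k' → ∀ x y, Commute ((e 1 k).toAlgHom.toRingHom x)
        ((e 1 k').toAlgHom.toRingHom y) :=
      fun k k' hkk x y => hcomm 1 1 k k' (fun hp => hkk (congrArg Prod.snd hp)) x y
    have hXY : ∀ k k' x y, Commute ((e 0 k).toAlgHom.toRingHom x)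
        ((e 1 k').toAlgHom.toRingHom y) :=
      fun k k' x y => hcomm 0 1 k k' (hne2 k k') x y
    have hfXX : ∀ k k', k ≠ k' → ∀ x y, Commute ((f 0 k).toAlgHom.toRingHom x)
        ((f 0 k').toAlgHom.toRingHom y) :=
      fun k k' hkk x y => hcomm' 0 0 k k' (fun hp => hkk (congrArg Prod.snd hp)) x y
    have hfYY : ∀ k k', k ≠ k' → ∀ x y, Commute ((f 1 k).toAlgHom.toRingHom x)
        ((f 1 k').toAlgHom.toRingHom y) :=
      fun k k' hkk x y => hcomm' 1 1 k k' (fun hp => hkk (congrArg Prod.snd hp)) x y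
    have hfXY : ∀ k k' x y, Commute ((f 0 k).toAlgHom.toRingHom x)
        ((f 1 k').toAlgHom.toRingHom y) :=
      fun k k' x y => hcomm' 0 1 k k' (hne2 k k') x y
    have hψY1 : ∀ n : ℕ, (ψt 1) (t 1 ^ n) = 1 := by
      intro n
      have h1 := (hψt 1).2 0 (fun _ => 1) (fun _ => n)
        (fun i hi => absurd hi (by omega)) (fun i h0 h1 => absurd h1 (by omega))
      simpa using h1
    have hψval : (ψt 0) ((lw.map (ι 0)).prod) = ψ 0 lw.prod := by
      rw [← map_list_prod (ι 0) lw]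
      have h1 := (hψt 0).2 1 (fun _ => lw.prod) (fun _ => 0)
        (fun i _ => ⟨lw, hlwne, hlwG, rfl⟩) (fun i h0 h1 => absurd h1 (by omega))
      simpa using h1
    have hΨc : ∀ (x : ℕ → B 0) (y : ℕ → B 1),
        Ψ (CMJ.siteProd (fun k => (e 0 k).toAlgHom.toRingHom) x 1 (M + 2) *
           CMJ.siteProd (fun k => (e 1 k).toAlgHom.toRingHom) y 1 (M + 2)) =
          ((ψt 0) (x (M + 2)) * (ψt 1) (y (M + 2))) •
            (CMJ.siteProd (fun k => (f 0 k).toAlgHom.toRingHom) x 1 (M + 1) *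
             CMJ.siteProd (fun k => (f 1 k).toAlgHom.toRingHom) y 1 (M + 1)) :=
      fun x y => hΨ x y
    have hLc : ∀ k, 1 ≤ k → k ≤ M + 1 →
        (f 1 k).toAlgHom.toRingHom (t 1 * (1 - t 1)) ∈ L' := by
      intro k h1 h2
      rw [hL']
      exact TwoSidedIdeal.subset_span ⟨1, k, h1, h2, rfl⟩
    have hj : j 0 lw.prod = ((lw.map (ι 0)).map
        (CMJ.jGen (fun k => (e 0 k).toAlgHom.toRingHom)
          (fun k => (e 1 k).toAlgHom.toRingHom) (t 1) (M + 2))).prod := by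
      rw [map_list_prod (j 0) lw, List.map_map]
      exact congrArg List.prod (List.map_congr_left fun a ha => hj1 a (hlwG a ha))
    have hj' : j' 0 lw.prod = ((lw.map (ι 0)).map
        (CMJ.jGen (fun k => (f 0 k).toAlgHom.toRingHom)
          (fun k => (f 1 k).toAlgHom.toRingHom) (t 1) (M + 1))).prod := by
      rw [map_list_prod (j' 0) lw, List.map_map]
      exact congrArg List.prod (List.map_congr_left fun a ha => hj1' a (hlwG a ha))
    have hmain := CMJ.core M (fun k => (e 0 k).toAlgHom.toRingHom)
      (fun k => (e 1 k).toAlgHom.toRingHom) (fun k => (f 0 k).toAlgHom.toRingHom)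
      (fun k => (f 1 k).toAlgHom.toRingHom) hXX hYY hXY hfXX hfYY hfXY (t 1)
      (⇑(ψt 0)) (⇑(ψt 1)) (hψt 0).1 hψY1 Ψ hΨc L' hLc (lw.map (ι 0))
      (fun hnil => hlwne (by simpa using hnil))
    rw [hj, hj', ← hψval,
      show f 1 (M + 1) (1 - t 1) = 1 - f 1 (M + 1) (t 1) by rw [map_sub, map_one]]
    exact hmain
  · -- second component
    obtain ⟨lv, hlvne, hlvG, rfl⟩ := hv
    have hXX : ∀ k k', k ≠ k' → ∀ x y, Commute ((e 1 k).toAlgHom.toRingHom x)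
        ((e 1 k').toAlgHom.toRingHom y) :=
      fun k k' hkk x y => hcomm 1 1 k k' (fun hp => hkk (congrArg Prod.snd hp)) x y
    have hYY : ∀ k k', k ≠ k' → ∀ x y, Commute ((e 0 k).toAlgHom.toRingHom x)
        ((e 0 k').toAlgHom.toRingHom y) :=
      fun k k' hkk x y => hcomm 0 0 k k' (fun hp => hkk (congrArg Prod.snd hp)) x y
    have hXY : ∀ k k' x y, Commute ((e 1 k).toAlgHom.toRingHom x)
        ((e 0 k').toAlgHom.toRingHom y) :=
      fun k k' x y => hcomm 1 0 k k' (hne2' k k') x y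
    have hfXX : ∀ k k', k ≠ k' → ∀ x y, Commute ((f 1 k).toAlgHom.toRingHom x)
        ((f 1 k').toAlgHom.toRingHom y) :=
      fun k k' hkk x y => hcomm' 1 1 k k' (fun hp => hkk (congrArg Prod.snd hp)) x y
    have hfYY : ∀ k k', k ≠ k' → ∀ x y, Commute ((f 0 k).toAlgHom.toRingHom x)
        ((f 0 k').toAlgHom.toRingHom y) :=
      fun k k' hkk x y => hcomm' 0 0 k k' (fun hp => hkk (congrArg Prod.snd hp)) x y
    have hfXY : ∀ k k' x y, Commute ((f 1 k).toAlgHom.toRingHom x)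
        ((f 0 k').toAlgHom.toRingHom y) :=
      fun k k' x y => hcomm' 1 0 k k' (hne2' k k') x y
    have hψY0 : ∀ n : ℕ, (ψt 0) (t 0 ^ n) = 1 := by
      intro n
      have h1 := (hψt 0).2 0 (fun _ => 1) (fun _ => n)
        (fun i hi => absurd hi (by omega)) (fun i h0 h1 => absurd h1 (by omega))
      simpa using h1
    have hψval : (ψt 1) ((lv.map (ι 1)).prod) = ψ 1 lv.prod := by
      rw [← map_list_prod (ι 1) lv]
      have h1 := (hψt 1).2 1 (fun _ => lv.prod) (fun _ => 0)
        (fun i _ => ⟨lv, hlvne, hlvG, rfl⟩) (fun i h0 h1 => absurd h1 (by omega))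
      simpa using h1
    have hΨm : ∀ (x : ℕ → B 1) (y : ℕ → B 0),
        Ψ (CMJ.siteProd (fun k => (e 1 k).toAlgHom.toRingHom) x 1 (M + 2) *
           CMJ.siteProd (fun k => (e 0 k).toAlgHom.toRingHom) y 1 (M + 2)) =
          ((ψt 1) (x (M + 2)) * (ψt 0) (y (M + 2))) •
            (CMJ.siteProd (fun k => (f 1 k).toAlgHom.toRingHom) x 1 (M + 1) *
             CMJ.siteProd (fun k => (f 0 k).toAlgHom.toRingHom) y 1 (M + 1)) := by
      intro x y
      have hab : Commute
          (CMJ.siteProd (fun k => (e 0 k).toAlgHom.toRingHom) y 1 (M + 2))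
          (CMJ.siteProd (fun k => (e 1 k).toAlgHom.toRingHom) x 1 (M + 2)) := by
        apply CMJ.commute_ordProd
        intro l _ _
        exact (CMJ.commute_ordProd fun l' _ _ => hcomm 1 0 l l' (hne2' l l') _ _).symm
      have hab' : Commute
          (CMJ.siteProd (fun k => (f 0 k).toAlgHom.toRingHom) y 1 (M + 1))
          (CMJ.siteProd (fun k => (f 1 k).toAlgHom.toRingHom) x 1 (M + 1)) := by
        apply CMJ.commute_ordProd
        intro l _ _
        exact (CMJ.commute_ordProd fun l' _ _ => hcomm' 1 0 l l' (hne2' l l') _ _).symm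
      calc Ψ (CMJ.siteProd (fun k => (e 1 k).toAlgHom.toRingHom) x 1 (M + 2) *
            CMJ.siteProd (fun k => (e 0 k).toAlgHom.toRingHom) y 1 (M + 2))
          = Ψ (CMJ.siteProd (fun k => (e 0 k).toAlgHom.toRingHom) y 1 (M + 2) *
            CMJ.siteProd (fun k => (e 1 k).toAlgHom.toRingHom) x 1 (M + 2)) := by
            rw [hab.eq]
        _ = ((ψt 0) (y (M + 2)) * (ψt 1) (x (M + 2))) •
            (CMJ.siteProd (fun k => (f 0 k).toAlgHom.toRingHom) y 1 (M + 1) *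
             CMJ.siteProd (fun k => (f 1 k).toAlgHom.toRingHom) x 1 (M + 1)) := hΨ y x
        _ = ((ψt 1) (x (M + 2)) * (ψt 0) (y (M + 2))) •
            (CMJ.siteProd (fun k => (f 1 k).toAlgHom.toRingHom) x 1 (M + 1) *
             CMJ.siteProd (fun k => (f 0 k).toAlgHom.toRingHom) y 1 (M + 1)) := by
            rw [mul_comm ((ψt 0) (y (M + 2))), hab'.eq]
    have hLc : ∀ k, 1 ≤ k → k ≤ M + 1 →
        (f 0 k).toAlgHom.toRingHom (t 0 * (1 - t 0)) ∈ L' := by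
      intro k h1 h2
      rw [hL']
      exact TwoSidedIdeal.subset_span ⟨0, k, h1, h2, rfl⟩
    have hj : j 1 lv.prod = ((lv.map (ι 1)).map
        (CMJ.jGen (fun k => (e 1 k).toAlgHom.toRingHom)
          (fun k => (e 0 k).toAlgHom.toRingHom) (t 0) (M + 2))).prod := by
      rw [map_list_prod (j 1) lv, List.map_map]
      refine congrArg List.prod (List.map_congr_left fun a ha => ?_)
      rw [hj2 a (hlvG a ha)]
      show _ = CMJ.jGen (fun k => (e 1 k).toAlgHom.toRingHom)
        (fun k => (e 0 k).toAlgHom.toRingHom) (t 0) (M + 2) (ι 1 a)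
      unfold CMJ.jGen
      refine Finset.sum_congr rfl fun k hk => ?_
      have hco : Commute (tBlock (fun l => e 0 l (t 0)) k (M + 2))
          (embSite (fun l x => e 1 l x) (M + 2) k (ι 1 a) -
            embSite (fun l x => e 1 l x) (M + 2) (k + 1) (ι 1 a)) := by
        refine Commute.sub_right ?_ ?_ <;>
        · unfold embSite
          split
          · unfold tBlock
            split
            · exact Commute.zero_left _
            · exact (CMJ.commute_ordProd fun l _ _ =>
                hcomm 1 0 _ l (hne2' _ l) _ _).symm
          · exact Commute.zero_right _
      exact hco.eq
    have hj' : j' 1 lv.prod = ((lv.map (ι 1)).map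
        (CMJ.jGen (fun k => (f 1 k).toAlgHom.toRingHom)
          (fun k => (f 0 k).toAlgHom.toRingHom) (t 0) (M + 1))).prod := by
      rw [map_list_prod (j' 1) lv, List.map_map]
      refine congrArg List.prod (List.map_congr_left fun a ha => ?_)
      rw [hj2' a (hlvG a ha)]
      show _ = CMJ.jGen (fun k => (f 1 k).toAlgHom.toRingHom)
        (fun k => (f 0 k).toAlgHom.toRingHom) (t 0) (M + 1) (ι 1 a)
      unfold CMJ.jGen
      refine Finset.sum_congr rfl fun k hk => ?_
      have hco : Commute (tBlock (fun l => f 0 l (t 0)) k (M + 1))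
          (embSite (fun l x => f 1 l x) (M + 1) k (ι 1 a) -
            embSite (fun l x => f 1 l x) (M + 1) (k + 1) (ι 1 a)) := by
        refine Commute.sub_right ?_ ?_ <;>
        · unfold embSite
          split
          · unfold tBlock
            split
            · exact Commute.zero_left _
            · exact (CMJ.commute_ordProd fun l _ _ =>
                hcomm' 1 0 _ l (hne2' _ l) _ _).symm
          · exact Commute.zero_right _
      exact hco.eq
    have hmain := CMJ.core M (fun k => (e 1 k).toAlgHom.toRingHom)
      (fun k => (e 0 k).toAlgHom.toRingHom) (fun k => (f 1 k).toAlgHom.toRingHom)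
      (fun k => (f 0 k).toAlgHom.toRingHom) hXX hYY hXY hfXX hfYY hfXY (t 0)
      (⇑(ψt 1)) (⇑(ψt 0)) (hψt 1).1 hψY0 Ψ hΨm L' hLc (lv.map (ι 1))
      (fun hnil => hlvne (by simpa using hnil))
    rw [hj, hj', ← hψval,
      show f 0 (M + 1) (1 - t 0) = 1 - f 0 (M + 1) (t 0) by rw [map_sub, map_one]]
    exact hmain
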